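/- Let A be an m×n real matrix, μ > 0, H = A Aᵀ + μ I, g ∈ ℝ^m, d ∈ ℝ^m with residual r = H d + g satisfying ‖r‖ ≤ τ μ ‖d‖ for τ ∈ (0, 1/2). Define q(d) = (1/2)‖Aᵀ d + b‖² where g = A b. Then q(0) − q(d) ≥ (μ/2) ‖d‖². -/

import Mathlib

/-- Model decrease lower bound for the inexact LM step: with `H = A Aᵀ + μ I`,
`g = A b`, residual `r = H d + g` with `‖r‖ ≤ τ μ ‖d‖` for `τ ∈ (0,1/2)`, and
`q(d) = (1/2)‖Aᵀ d + b‖²`, one has `q(0) − q(d) ≥ (μ/2)‖d‖²`. -/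
theorem model_decrease_lower (m n : ℕ)
    (A : EuclideanSpace ℝ (Fin n) →L[ℝ] EuclideanSpace ℝ (Fin m))
    (b : EuclideanSpace ℝ (Fin n)) (μ τ : ℝ)
    (hμ : 0 < μ) (hτ : τ ∈ Set.Ioo (0 : ℝ) (1 / 2))
    (H : EuclideanSpace ℝ (Fin m) →L[ℝ] EuclideanSpace ℝ (Fin m))
    (hH : H = A.comp (ContinuousLinearMap.adjoint A) + μ • ContinuousLinearMap.id ℝ _)
    (g d r : EuclideanSpace ℝ (Fin m))
    (hg : g = A b) (hr : r = H d + g) (hres : ‖r‖ ≤ τ * μ * ‖d‖)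
    (q : EuclideanSpace ℝ (Fin m) → ℝ)
    (hq : ∀ u, q u = (1 / 2) * ‖(ContinuousLinearMap.adjoint A) u + b‖ ^ 2) :
    q 0 - q d ≥ (μ / 2) * ‖d‖ ^ 2 := by
  obtain ⟨hτ0, hτ2⟩ := hτ
  set a := (ContinuousLinearMap.adjoint A) d with ha
  have hq0 : q 0 = (1 / 2) * ‖b‖ ^ 2 := by
    rw [hq 0]; simp
  have hqd : q d = (1 / 2) * ‖a + b‖ ^ 2 := by rw [hq d]
  have hexp : ‖a + b‖ ^ 2 = ‖a‖ ^ 2 + 2 * inner ℝ a b + ‖b‖ ^ 2 := by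
    rw [@norm_add_sq_real]; try ring
  have hab : (inner ℝ a b : ℝ) = inner ℝ g d := by
    rw [hg, ha, ContinuousLinearMap.adjoint_inner_left, real_inner_comm]
  have hHd : (inner ℝ (H d) d : ℝ) = ‖a‖ ^ 2 + μ * ‖d‖ ^ 2 := by
    rw [hH]
    simp only [ContinuousLinearMap.add_apply, ContinuousLinearMap.comp_apply,
      ContinuousLinearMap.smul_apply, ContinuousLinearMap.id_apply, inner_add_left,
      inner_smul_left, RCLike.star_def, conj_trivial]
    rw [← ha, ← ContinuousLinearMap.adjoint_inner_right A, real_inner_self_eq_norm_sq,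
      real_inner_self_eq_norm_sq]
    try ring
  have hgd : (inner ℝ g d : ℝ) = inner ℝ r d - (‖a‖ ^ 2 + μ * ‖d‖ ^ 2) := by
    have : (inner ℝ r d : ℝ) = inner ℝ (H d) d + inner ℝ g d := by rw [hr, inner_add_left]
    rw [this, hHd]; ring
  have hrd : (inner ℝ r d : ℝ) ≤ τ * μ * ‖d‖ ^ 2 := by
    calc (inner ℝ r d : ℝ) ≤ ‖r‖ * ‖d‖ := real_inner_le_norm r d
    _ ≤ τ * μ * ‖d‖ * ‖d‖ := by
        apply mul_le_mul_of_nonneg_right hres (norm_nonneg d)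
    _ = τ * μ * ‖d‖ ^ 2 := by ring
  have hd2 : 0 ≤ ‖d‖ ^ 2 := sq_nonneg _
  have ha2 : 0 ≤ ‖a‖ ^ 2 := sq_nonneg _
  rw [hq0, hqd, hexp, hab, hgd]
  nlinarith [mul_le_mul_of_nonneg_right hτ2.le (mul_nonneg hμ.le hd2)]
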